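/- Let M be a matroid on E, I ⊆ E independent, and X ⊆ span_M(I). Then there is a unique minimal subset I' ⊆ I with X ⊆ span_M(I'), and it equals (X ∩ I) ∪ ⋃_{e ∈ X \ I} (C_M(e,I) \ {e}), where C_M(e,I) is the fundamental circuit of e on I. -/

import Mathlib

open Set

variable {α : Type*}

/-- `C` is a circuit of the matroid `M`: a minimal dependent subset of the ground set. -/
def MCircuit (M : Matroid α) (C : Set α) : Prop :=
  C ⊆ M.E ∧ ¬ M.Indep C ∧ ∀ D, D ⊂ C → M.Indep D

/-- `C` is the fundamental circuit of `e` on the independent set `I`. -/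
def FundCircuit (M : Matroid α) (e : α) (I C : Set α) : Prop :=
  MCircuit M C ∧ e ∈ C ∧ C ⊆ insert e I

/-- Every element of a circuit is in the closure of the rest of the circuit. -/
lemma MCircuit.mem_closure_diff {M : Matroid α} {C : Set α} (hC : MCircuit M C)
    {f : α} (hf : f ∈ C) : f ∈ M.closure (C \ {f}) := by
  obtain ⟨hCE, hCdep, hmin⟩ := hC
  have hind : M.Indep (C \ {f}) := hmin _ (sdiff_singleton_ssubset.2 hf)
  have hins : insert f (C \ {f}) = C := insert_diff_singleton.trans (by simp [hf])
  have hdep : M.Dep (insert f (C \ {f})) := by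
    rw [hins]; exact ⟨hCdep, hCE⟩
  exact (hind.insert_dep_iff.1 hdep).1

/-- For independent `I` and `X ⊆ span_M(I)`, the set
`G = (X ∩ I) ∪ ⋃_{e ∈ X \ I} (C_M(e,I) \ {e})` is the unique minimal subset of `I`
spanning `X`: it is contained in `I`, spans `X`, and is contained in every
`I' ⊆ I` spanning `X`. -/
theorem stmt7 (M : Matroid α) [M.Finitary] (I : Set α) (hI : M.Indep I)
    (X : Set α) (hX : X ⊆ M.closure I)
    (Cf : α → Set α) (hCf : ∀ e ∈ X \ I, FundCircuit M e I (Cf e)) :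
    ((X ∩ I) ∪ (⋃ e ∈ X \ I, Cf e \ {e})) ⊆ I ∧
    X ⊆ M.closure ((X ∩ I) ∪ (⋃ e ∈ X \ I, Cf e \ {e})) ∧
    ∀ I' ⊆ I, X ⊆ M.closure I' → ((X ∩ I) ∪ (⋃ e ∈ X \ I, Cf e \ {e})) ⊆ I' := by
  set G := (X ∩ I) ∪ (⋃ e ∈ X \ I, Cf e \ {e}) with hG
  have hGI : G ⊆ I := by
    apply union_subset inter_subset_right
    refine iUnion₂_subset fun e he => ?_
    obtain ⟨hC, heC, hCsub⟩ := hCf e he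
    intro f hf
    have := hCsub hf.1
    rcases this with h | h
    · exact absurd h hf.2
    · exact h
  refine ⟨hGI, ?_, ?_⟩
  · intro x hx
    by_cases hxI : x ∈ I
    · exact M.mem_closure_of_mem (Or.inl ⟨hx, hxI⟩) (hGI.trans hI.subset_ground)
    · have hxd : x ∈ X \ I := ⟨hx, hxI⟩
      obtain ⟨hC, hxC, hCsub⟩ := hCf x hxd
      have h1 : x ∈ M.closure (Cf x \ {x}) := hC.mem_closure_diff hxC
      have h2 : Cf x \ {x} ⊆ G := fun f hf => Or.inr (mem_biUnion hxd hf)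
      exact M.closure_subset_closure h2 h1
  · intro I' hI'I hXI'
    have hI' : M.Indep I' := hI.subset hI'I
    apply union_subset
    · rintro x ⟨hxX, hxI⟩
      have hx : x ∈ M.closure I' := hXI' hxX
      rcases hI'.mem_closure_iff.1 hx with hdep | h
      · exact absurd (hI.subset (insert_subset hxI hI'I)) hdep.not_indep
      · exact h
    · refine iUnion₂_subset fun e he => ?_
      obtain ⟨hC, heC, hCsub⟩ := hCf e he
      rintro f ⟨hfC, hfe⟩
      by_contra hfI'
      have hfI : f ∈ I := by
        rcases hCsub hfC with h | h
        · exact absurd h hfe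
        · exact h
      set J := I \ {f} with hJ
      have hI'J : I' ⊆ J := subset_diff_singleton hI'I hfI'
      have heJ : e ∈ M.closure J :=
        M.closure_subset_closure hI'J (hXI' he.1)
      have hf1 : f ∈ M.closure (Cf e \ {f}) := hC.mem_closure_diff hfC
      have hsub : Cf e \ {f} ⊆ insert e J := by
        rintro g ⟨hgC, hgf⟩
        rcases hCsub hgC with h | h
        · exact Or.inl h
        · exact Or.inr ⟨h, hgf⟩
      have : f ∈ M.closure (insert e J) := M.closure_subset_closure hsub hf1
      rw [Matroid.closure_insert_eq_of_mem_closure heJ] at this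
      exact hI.notMem_closure_diff_of_mem hfI this
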